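/- Existence of a minimizer for the finite-dimensional two-layer regression problem (Reg): Let K : ℝ^D × ℝ^D → ℝ be a continuous kernel (so that for any finite set of points the matrix (K(u_n, u_m))_{n,m} is symmetric positive semidefinite), let x_1, …, x_N ∈ Ω ⊆ ℝ^d, let 𝐊 : Ω × Ω → ℝ^{D×D} be a matrix-valued kernel whose block matrix 𝐊̲ ∈ ℝ^{ND×ND} with blocks 𝐊(x_i, x_j) is symmetric positive definite, and let λ, μ > 0. For c ∈ ℝ^{ND} define g_c(x) = Σ_{j=1}^N Σ_{ℓ=1}^D c_{j,ℓ} 𝐊(x_j, x) e_ℓ, the matrix Q(c) = (K(g_c(x_n), g_c(x_m)))_{n,m=1}^N, A(c) = (Q(c) + λI)^{−1}, and the objective F(c) = λ yᵀ A(c) Q(c) A(c) y + μ cᵀ 𝐊̲ c + yᵀ (I − Q(c)A(c))ᵀ (I − Q(c)A(c)) y for a fixed y ∈ ℝ^N. Then F is continuous, satisfies F(c) ≥ μ λ_min(𝐊̲) ‖c‖²_2 where λ_min(𝐊̲) > 0 is the smallest eigenvalue of 𝐊̲, and F attains its global minimum on ℝ^{ND}. -/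

import Mathlib

open Matrix

noncomputable section

/-- `ℝ^n` with the Euclidean (ℓ²) structure. -/
abbrev Euc (n : ℕ) : Type := EuclideanSpace ℝ (Fin n)

lemma rayleigh_aux {n : Type*} [Fintype n] [DecidableEq n] [Nonempty n]
    {M : Matrix n n ℝ} (hM : M.IsHermitian) (v : n → ℝ) :
    (⨅ i, hM.eigenvalues i) * (v ⬝ᵥ v) ≤ v ⬝ᵥ M *ᵥ v := by
  set U : Matrix n n ℝ := (hM.eigenvectorUnitary : Matrix n n ℝ) with hU
  set w : n → ℝ := star U *ᵥ v with hw
  have hvU : Matrix.vecMul v U = w := by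
    ext i
    simp [Matrix.vecMul, Matrix.mulVec, dotProduct, hw, Matrix.star_apply, mul_comm]
  have hUU : U * star U = 1 := Matrix.mem_unitaryGroup_iff.mp hM.eigenvectorUnitary.2
  have key : v ⬝ᵥ M *ᵥ v = ∑ i, hM.eigenvalues i * (w i * w i) := by
    conv_lhs => rw [hM.spectral_theorem, Unitary.conjStarAlgAut_apply]
    rw [← Matrix.mulVec_mulVec, ← Matrix.mulVec_mulVec, Matrix.dotProduct_mulVec, hvU]
    simp only [dotProduct, Matrix.mulVec_diagonal, Function.comp_apply,
      RCLike.ofReal_real_eq_id, id_eq]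
    exact Finset.sum_congr rfl fun i _ => by ring
  have key2 : v ⬝ᵥ v = ∑ i, w i * w i := by
    calc v ⬝ᵥ v = v ⬝ᵥ ((U * star U) *ᵥ v) := by rw [hUU, Matrix.one_mulVec]
      _ = Matrix.vecMul v U ⬝ᵥ (star U *ᵥ v) := by
          rw [← Matrix.mulVec_mulVec, Matrix.dotProduct_mulVec]
      _ = ∑ i, w i * w i := by rw [hvU]; rfl
  rw [key, key2, Finset.mul_sum]
  refine Finset.sum_le_sum fun i _ => ?_
  exact mul_le_mul_of_nonneg_right (ciInf_le (Set.finite_range _).bddBelow i) (mul_self_nonneg _)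

/-- **Existence of a minimizer for the finite-dimensional two-layer regression problem
(Reg).**  `K` is a continuous (symmetric, positive semidefinite) scalar kernel on `ℝ^D`,
`𝐊ᵇ` a matrix-valued kernel on `Ω` whose block kernel matrix `KB` at the points
`x_1, …, x_N` is symmetric positive definite, and `λ, μ > 0`.  For coefficients
`c ∈ ℝ^{ND}`, `gc c m = Σ_{j,ℓ} c_{j,ℓ} 𝐊ᵇ(x_j, x_m) e_ℓ`, `Q c` is the outer kernel
matrix `(K(gc c n, gc c m))_{n,m}`, and `F` is the objective of problem (Reg).  Then `F`
is continuous, bounded below by `μ λ_min(KB) ‖c‖²` with `λ_min(KB) > 0` the smallest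
eigenvalue of `KB`, and attains its global minimum. -/
theorem two_layer_regression_minimizer_exists
    (D d N : ℕ) (hN : 0 < N) (hD : 0 < D)
    (K : Euc D → Euc D → ℝ)
    (hKcont : Continuous fun p : Euc D × Euc D => K p.1 p.2)
    (hKsymm : ∀ u v, K u v = K v u)
    (hKpsd : ∀ (n : ℕ) (u : Fin n → Euc D),
        Matrix.PosSemidef (Matrix.of fun i j => K (u i) (u j)))
    (Ω : Set (Euc d)) (x : Fin N → ↥Ω)
    (Kb : ↥Ω → ↥Ω → Matrix (Fin D) (Fin D) ℝ)
    (KB : Matrix (Fin N × Fin D) (Fin N × Fin D) ℝ)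
    (hKB : ∀ p q, KB p q = Kb (x p.1) (x q.1) p.2 q.2)
    (hKBpd : KB.PosDef)
    (lam mu : ℝ) (hlam : 0 < lam) (hmu : 0 < mu)
    (y : Fin N → ℝ)
    (gc : EuclideanSpace ℝ (Fin N × Fin D) → Fin N → Euc D)
    (hgc : ∀ c n i, gc c n i = ∑ j, ∑ ℓ, c (j, ℓ) * Kb (x j) (x n) i ℓ)
    (Q : EuclideanSpace ℝ (Fin N × Fin D) → Matrix (Fin N) (Fin N) ℝ)
    (hQ : ∀ c n m, Q c n m = K (gc c n) (gc c m))
    (F : EuclideanSpace ℝ (Fin N × Fin D) → ℝ)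
    (hF : ∀ c, F c =
        lam * (y ⬝ᵥ ((Q c + lam • 1)⁻¹ * Q c * (Q c + lam • 1)⁻¹).mulVec y)
        + mu * ((fun p => c p) ⬝ᵥ KB.mulVec fun p => c p)
        + (((1 : Matrix (Fin N) (Fin N) ℝ) - Q c * (Q c + lam • 1)⁻¹).mulVec y ⬝ᵥ
            ((1 : Matrix (Fin N) (Fin N) ℝ) - Q c * (Q c + lam • 1)⁻¹).mulVec y)) :
    Continuous F ∧
    0 < (⨅ p, hKBpd.1.eigenvalues p) ∧
    (∀ c, mu * (⨅ p, hKBpd.1.eigenvalues p) * ‖c‖ ^ 2 ≤ F c) ∧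
    ∃ cmin, ∀ c, F cmin ≤ F c := by
  haveI : Nonempty (Fin N × Fin D) := ⟨(⟨0, hN⟩, ⟨0, hD⟩)⟩
  -- basic facts about Q
  have hQpsd : ∀ c, (Q c).PosSemidef := by
    intro c
    have hQe : Q c = Matrix.of fun n m => K (gc c n) (gc c m) := by
      ext n m; exact hQ c n m
    rw [hQe]; exact hKpsd N (gc c)
  have hPpd : ∀ c, (Q c + lam • 1).PosDef := by
    intro c
    refine Matrix.PosDef.posSemidef_add (hQpsd c) ?_
    rw [Matrix.smul_one_eq_diagonal]
    exact Matrix.PosDef.diagonal fun _ => hlam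
  -- continuity of gc
  have hgcont : ∀ n, Continuous fun c : EuclideanSpace ℝ (Fin N × Fin D) => gc c n := by
    intro n
    have he : (fun c : EuclideanSpace ℝ (Fin N × Fin D) => gc c n)
        = (WithLp.equiv 2 (Fin D → ℝ)).symm ∘
          fun (c : EuclideanSpace ℝ (Fin N × Fin D)) (i : Fin D) =>
            ∑ j, ∑ ℓ, c (j, ℓ) * Kb (x j) (x n) i ℓ := by
      funext c
      exact PiLp.ext fun i => hgc c n i
    rw [he]
    refine (PiLp.continuous_toLp 2 fun _ : Fin D => ℝ).comp (continuous_pi fun i => ?_)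
    refine continuous_finset_sum _ fun j _ => continuous_finset_sum _ fun ℓ _ => ?_
    exact ((continuous_apply (j, ℓ)).comp
      (PiLp.continuous_ofLp 2 fun _ : Fin N × Fin D => ℝ)).mul continuous_const
  -- continuity of Q
  have hQcont : Continuous fun c => Q c := by
    have he : (fun c => Q c) = fun c => Matrix.of fun n m => K (gc c n) (gc c m) := by
      funext c; ext n m; exact hQ c n m
    rw [he]
    refine continuous_matrix fun n m => ?_
    exact hKcont.comp ((hgcont n).prodMk (hgcont m))
  have hPcont : Continuous fun c => Q c + lam • 1 := hQcont.add continuous_const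
  -- continuity of the inverse
  have hinvcont : Continuous fun c => (Q c + lam • 1)⁻¹ := by
    rw [continuous_iff_continuousAt]
    intro c
    have hdet : IsUnit (Q c + lam • 1).det := (isUnit_iff_ne_zero).2 (hPpd c).det_pos.ne'
    have hinv : ContinuousAt (fun M : Matrix (Fin N) (Fin N) ℝ => M⁻¹) (Q c + lam • 1) :=
      continuousAt_matrix_inv _ (NormedRing.inverse_continuousAt hdet.unit)
    exact ContinuousAt.comp hinv hPcont.continuousAt
  -- continuity of F
  have hFcont : Continuous F := by
    have he : F = fun c =>
        lam * (y ⬝ᵥ ((Q c + lam • 1)⁻¹ * Q c * (Q c + lam • 1)⁻¹).mulVec y)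
        + mu * ((fun p => c p) ⬝ᵥ KB.mulVec fun p => c p)
        + (((1 : Matrix (Fin N) (Fin N) ℝ) - Q c * (Q c + lam • 1)⁻¹).mulVec y ⬝ᵥ
            ((1 : Matrix (Fin N) (Fin N) ℝ) - Q c * (Q c + lam • 1)⁻¹).mulVec y) :=
      funext hF
    rw [he]
    have h1 : Continuous fun c => (Q c + lam • 1)⁻¹ * Q c * (Q c + lam • 1)⁻¹ :=
      (hinvcont.matrix_mul hQcont).matrix_mul hinvcont
    have h2 : Continuous fun c =>
        ((1 : Matrix (Fin N) (Fin N) ℝ) - Q c * (Q c + lam • 1)⁻¹).mulVec y :=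
      (continuous_const.sub (hQcont.matrix_mul hinvcont)).matrix_mulVec continuous_const
    have h3 : Continuous fun c : EuclideanSpace ℝ (Fin N × Fin D) =>
        ((fun p => c p) ⬝ᵥ KB.mulVec fun p => c p) := by
      have hc : Continuous fun c : EuclideanSpace ℝ (Fin N × Fin D) => (fun p => c p) :=
        continuous_pi fun p =>
          (continuous_apply p).comp (PiLp.continuous_ofLp 2 fun _ : Fin N × Fin D => ℝ)
      exact hc.dotProduct (continuous_const.matrix_mulVec hc)
    exact ((continuous_const.mul
      (continuous_const.dotProduct (h1.matrix_mulVec continuous_const))).add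
      (continuous_const.mul h3)).add (h2.dotProduct h2)
  -- positivity of the smallest eigenvalue
  obtain ⟨p0, hp0⟩ := Finite.exists_min hKBpd.1.eigenvalues
  have hinfpos : 0 < ⨅ p, hKBpd.1.eigenvalues p :=
    lt_of_lt_of_le (hKBpd.eigenvalues_pos p0) (le_ciInf hp0)
  -- the lower bound
  have hbound : ∀ c, mu * (⨅ p, hKBpd.1.eigenvalues p) * ‖c‖ ^ 2 ≤ F c := by
    intro c
    set A := (Q c + lam • 1)⁻¹ with hA
    have hApd : A.PosDef := (hPpd c).inv
    have ht1 : (0 : ℝ) ≤ y ⬝ᵥ (A * Q c * A).mulVec y := by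
      have h := ((hQpsd c).mul_mul_conjTranspose_same A).dotProduct_mulVec_nonneg y
      rwa [hApd.1.eq, star_trivial] at h
    have ht3 : (0 : ℝ) ≤
        (((1 : Matrix (Fin N) (Fin N) ℝ) - Q c * A).mulVec y ⬝ᵥ
          ((1 : Matrix (Fin N) (Fin N) ℝ) - Q c * A).mulVec y) :=
      Finset.sum_nonneg fun i _ => mul_self_nonneg _
    have hnorm : ((fun p => c p) ⬝ᵥ fun p => c p) = ‖c‖ ^ 2 := by
      rw [← real_inner_self_eq_norm_sq]
      simp [dotProduct, PiLp.inner_apply, RCLike.inner_apply, conj_trivial]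
      rw [EuclideanSpace.norm_sq_eq]
      exact Finset.sum_congr rfl fun i _ => by rw [Real.norm_eq_abs, sq_abs, sq]
    have ht2 : (⨅ p, hKBpd.1.eigenvalues p) * ‖c‖ ^ 2 ≤
        ((fun p => c p) ⬝ᵥ KB.mulVec fun p => c p) := by
      have h := rayleigh_aux hKBpd.1 fun p => c p
      rwa [hnorm] at h
    have ht2' : mu * ((⨅ p, hKBpd.1.eigenvalues p) * ‖c‖ ^ 2) ≤
        mu * ((fun p => c p) ⬝ᵥ KB.mulVec fun p => c p) :=
      mul_le_mul_of_nonneg_left ht2 hmu.le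
    rw [hF c]
    have ht1' : (0 : ℝ) ≤ lam * (y ⬝ᵥ (A * Q c * A).mulVec y) := mul_nonneg hlam.le ht1
    rw [← hA]
    nlinarith [ht1', ht2', ht3]
  refine ⟨hFcont, hinfpos, hbound, ?_⟩
  -- existence of a minimizer
  set α := mu * (⨅ p, hKBpd.1.eigenvalues p) with hα
  have hαpos : 0 < α := mul_pos hmu hinfpos
  set S : Set (EuclideanSpace ℝ (Fin N × Fin D)) := F ⁻¹' Set.Iic (F 0) with hS
  have hS0 : (0 : EuclideanSpace ℝ (Fin N × Fin D)) ∈ S := by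
    simp only [hS, Set.mem_preimage, Set.mem_Iic, le_refl]
  have hSclosed : IsClosed S := isClosed_Iic.preimage hFcont
  have hF0nonneg : 0 ≤ F 0 := by
    have := hbound 0
    simpa using this.trans' (by positivity)
  have hSsub : S ⊆ Metric.closedBall 0 (Real.sqrt (F 0 / α)) := by
    intro c hc
    have h1 : α * ‖c‖ ^ 2 ≤ F 0 := (hbound c).trans hc
    have h2 : ‖c‖ ^ 2 ≤ F 0 / α := (le_div_iff₀' hαpos).2 h1
    have h3 : ‖c‖ ≤ Real.sqrt (F 0 / α) := by
      rw [← Real.sqrt_sq (norm_nonneg c)]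
      exact Real.sqrt_le_sqrt h2
    simpa [Metric.mem_closedBall, dist_zero_right] using h3
  have hScompact : IsCompact S :=
    (Metric.isCompact_of_isClosed_isBounded hSclosed
      ((Metric.isBounded_closedBall).subset hSsub))
  obtain ⟨cmin, hmem, hmin⟩ := hScompact.exists_isMinOn ⟨0, hS0⟩ hFcont.continuousOn
  refine ⟨cmin, fun c => ?_⟩
  by_cases hc : c ∈ S
  · exact hmin hc
  · have h1 : F 0 ≤ F c := le_of_lt (lt_of_not_ge hc)
    exact (hmin hS0).trans h1
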